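/- Let C : [0,∞) → L(l¹) be a strongly measurable family of continuous linear operators on l¹ = l¹(ℕ, ℝ) with ‖C(t)‖ ≤ M for almost all t, and suppose that for almost all t the matrix entries of C(t) are nonnegative off the diagonal, i.e. (C(t) e_j)_i ≥ 0 for all i ≠ j. Let v : [s,∞) → l¹ be continuous and satisfy v(t) = v(s) + ∫_s^t C(u)(v(u)) du (Bochner integral in l¹) for all t ≥ s. If every coordinate of v(s) is nonnegative, then every coordinate of v(t) is nonnegative for all t ≥ s. -/

import Mathlib

set_option maxHeartbeats 1000000


open MeasureTheory
open Set

/-- The Banach space `l¹ = l¹(ℕ, ℝ)` of absolutely summable real sequences. -/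
noncomputable abbrev l1Space : Type := lp (fun _ : ℕ => ℝ) 1

namespace L1Pos




lemma summable_abs (x : l1Space) : Summable fun i => |x i| := by
  have := (lp.memℓp x).summable (p := 1) (by norm_num)
  simpa using this

lemma summable_negpart (x : l1Space) : Summable fun i => max (-(x i)) 0 :=
  (summable_abs x).of_nonneg_of_le (fun i => le_max_right _ _)
    (fun i => max_le (neg_le_abs _) (abs_nonneg _))

/-- The l¹-norm of the negative part. -/
noncomputable def N (x : l1Space) : ℝ := ∑' i, max (-(x i)) 0

lemma N_nonneg (x : l1Space) : 0 ≤ N x :=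
  tsum_nonneg fun i => le_max_right _ _

lemma norm_eq_tsum (x : l1Space) : ‖x‖ = ∑' i, |x i| := by
  have := lp.norm_eq_tsum_rpow (p := 1) (by norm_num) x
  simpa using this

lemma N_le_norm (x : l1Space) : N x ≤ ‖x‖ := by
  rw [norm_eq_tsum]
  exact Summable.tsum_le_tsum (fun i => max_le (neg_le_abs _) (abs_nonneg _))
    (summable_negpart x) (summable_abs x)

lemma nonneg_of_N_eq_zero {x : l1Space} (h : N x = 0) (i : ℕ) : 0 ≤ x i := by
  have h1 : max (-(x i)) 0 ≤ N x :=
    Summable.le_tsum (summable_negpart x) i fun j _ => le_max_right _ _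
  rw [h] at h1
  have := le_max_right (-(x i)) 0
  nlinarith [le_max_left (-(x i)) 0, h1]

lemma N_eq_zero_of_nonneg {x : l1Space} (h : ∀ i, 0 ≤ x i) : N x = 0 := by
  have : ∀ i, max (-(x i)) 0 = 0 := fun i => max_eq_right (by linarith [h i])
  simp [N, this]

lemma N_add_le (x y : l1Space) : N (x + y) ≤ N x + N y := by
  have h : ∀ i, max (-((x + y) i)) 0 ≤ max (-(x i)) 0 + max (-(y i)) 0 := by
    intro i
    rw [lp.coeFn_add]
    simp only [Pi.add_apply]
    rcases le_total (x i + y i) 0 with h | h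
    · rw [max_eq_left (by linarith)]
      have := le_max_left (-(x i)) 0
      have := le_max_left (-(y i)) 0
      linarith
    · rw [max_eq_right (by linarith)]
      positivity
  calc N (x + y) ≤ ∑' i, (max (-(x i)) 0 + max (-(y i)) 0) :=
        Summable.tsum_le_tsum h (summable_negpart _) ((summable_negpart x).add (summable_negpart y))
    _ = N x + N y := Summable.tsum_add (summable_negpart x) (summable_negpart y)

lemma lipschitz_N : LipschitzWith 1 N := by
  have key : ∀ x y : l1Space, N x ≤ N y + ‖x - y‖ := by
    intro x y
    have : N x = N (y + (x - y)) := by rw [add_sub_cancel]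
    rw [this]
    calc N (y + (x - y)) ≤ N y + N (x - y) := N_add_le _ _
      _ ≤ N y + ‖x - y‖ := by linarith [N_le_norm (x - y)]
  apply LipschitzWith.of_dist_le_mul
  intro x y
  rw [dist_eq_norm, dist_eq_norm, NNReal.coe_one, one_mul]
  rw [Real.norm_eq_abs, abs_le]
  constructor
  · have := key y x
    rw [← neg_sub x y, norm_neg] at this
    linarith
  · linarith [key x y]


/-- coordinate evaluation as a continuous linear functional -/
noncomputable def coord (i : ℕ) : l1Space →L[ℝ] ℝ :=
  LinearMap.mkContinuous
    { toFun := fun x => x i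
      map_add' := fun x y => by simp [lp.coeFn_add]
      map_smul' := fun c x => by simp [lp.coeFn_smul] } 1
    (fun x => by
      show ‖(x : ℕ → ℝ) i‖ ≤ 1 * ‖x‖
      simpa using lp.norm_apply_le_norm (by norm_num) x i)

@[simp] lemma coord_apply (i : ℕ) (x : l1Space) : coord i x = x i := rfl

/-- the functional `x ↦ -∑_{i∈S} x i` -/
noncomputable def ellS (S : Finset ℕ) : l1Space →L[ℝ] ℝ := -∑ i ∈ S, coord i

lemma ellS_apply (S : Finset ℕ) (x : l1Space) : ellS S x = -∑ i ∈ S, x i := by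
  simp [ellS]

lemma ellS_le_N (S : Finset ℕ) (x : l1Space) : ellS S x ≤ N x := by
  rw [N]
  rw [ellS_apply, ← Finset.sum_neg_distrib]
  calc ∑ i ∈ S, -(x i) ≤ ∑ i ∈ S, max (-(x i)) 0 :=
        Finset.sum_le_sum fun i _ => le_max_left _ _
    _ ≤ ∑' i, max (-(x i)) 0 :=
        Summable.sum_le_tsum S (fun i _ => le_max_right _ _) (summable_negpart x)


lemma exists_ellS (x : l1Space) {ε : ℝ} (hε : 0 < ε) :
    ∃ S : Finset ℕ, N x - ε < ellS S x := by
  have hsum := (summable_negpart x).hasSum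
  have hev : ∀ᶠ F in Filter.atTop, N x - ε < ∑ i ∈ F, max (-(x i)) 0 := by
    have := hsum.tendsto_sum_nat
    have h2 : Filter.Tendsto (fun F : Finset ℕ => ∑ i ∈ F, max (-(x i)) 0)
        Filter.atTop (nhds (N x)) := hsum
    exact h2.eventually (eventually_gt_nhds (by linarith))
  obtain ⟨F, hF⟩ := hev.exists
  refine ⟨F.filter (fun i => x i < 0), ?_⟩
  have : ellS (F.filter (fun i => x i < 0)) x = ∑ i ∈ F, max (-(x i)) 0 := by
    rw [ellS_apply, ← Finset.sum_neg_distrib, Finset.sum_filter]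
    apply Finset.sum_congr rfl
    intro i _
    rcases lt_or_ge (x i) 0 with h | h
    · rw [if_pos h, max_eq_left (by linarith)]
    · rw [if_neg (not_lt.2 h), max_eq_right (by linarith)]
  rw [this]; exact hF

lemma N_integral_le {Ω : Type} [MeasurableSpace Ω] (μ : Measure Ω) (f : Ω → l1Space)
    (hf : Integrable f μ) (hNf : Integrable (fun ω => N (f ω)) μ) :
    N (∫ ω, f ω ∂μ) ≤ ∫ ω, N (f ω) ∂μ := by
  refine le_of_forall_pos_le_add fun ε hε => ?_
  obtain ⟨S, hS⟩ := exists_ellS (∫ ω, f ω ∂μ) hε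
  have h1 : ellS S (∫ ω, f ω ∂μ) = ∫ ω, ellS S (f ω) ∂μ :=
    (ContinuousLinearMap.integral_comp_comm _ hf).symm
  have h2 : ∫ ω, ellS S (f ω) ∂μ ≤ ∫ ω, N (f ω) ∂μ :=
    integral_mono ((ellS S).integrable_comp hf) hNf (fun ω => ellS_le_N S (f ω))
  rw [h1] at hS
  linarith

lemma single_smul (j : ℕ) (c : ℝ) : (lp.single 1 j c : l1Space) = c • (lp.single 1 j (1 : ℝ) : l1Space) := by
  apply lp.ext
  funext i
  rw [lp.coeFn_smul]
  simp only [Pi.smul_apply, smul_eq_mul, lp.single_apply]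
  rcases eq_or_ne i j with rfl | h
  · simp
  · simp [h]

lemma apply_nonneg_of_entries (T : l1Space →L[ℝ] l1Space)
    (hT : ∀ j i, 0 ≤ (T (lp.single 1 j 1)) i)
    (x : l1Space) (hx : ∀ i, 0 ≤ x i) (i : ℕ) : 0 ≤ (T x) i := by
  have h1 : HasSum (fun j => lp.single 1 j (x j)) x :=
    lp.hasSum_single (by norm_num) x
  have h2 : HasSum (fun j => ((coord i).comp T) (lp.single 1 j (x j)))
      (((coord i).comp T) x) := h1.mapL _
  have h3 : ∀ j, 0 ≤ ((coord i).comp T) (lp.single 1 j (x j)) := by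
    intro j
    rw [single_smul, _root_.map_smul]
    have : ((coord i).comp T) (lp.single 1 j (1:ℝ)) = (T (lp.single 1 j 1)) i := rfl
    rw [smul_eq_mul, this]
    exact mul_nonneg (hx j) (hT j i)
  exact hasSum_le h3 hasSum_zero h2

lemma memℓp_dominated (x : l1Space) (g : ℕ → ℝ) (hg : ∀ i, |g i| ≤ |x i|) :
    Memℓp g 1 := by
  apply memℓp_gen
  simp only [ENNReal.toReal_one, Real.rpow_one, Real.norm_eq_abs]
  exact (summable_abs x).of_nonneg_of_le (fun i => abs_nonneg _) hg

noncomputable def posPart (x : l1Space) : l1Space :=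
  ⟨fun i => max (x i) 0, memℓp_dominated x _ (fun i => by
    rw [abs_of_nonneg (le_max_right _ _)]
    exact max_le (le_abs_self _) (abs_nonneg _))⟩

noncomputable def negPart (x : l1Space) : l1Space :=
  ⟨fun i => max (-(x i)) 0, memℓp_dominated x _ (fun i => by
    rw [abs_of_nonneg (le_max_right _ _)]
    exact max_le (neg_le_abs _) (abs_nonneg _))⟩

@[simp] lemma posPart_apply (x : l1Space) (i : ℕ) : (posPart x) i = max (x i) 0 := rfl
@[simp] lemma negPart_apply (x : l1Space) (i : ℕ) : (negPart x) i = max (-(x i)) 0 := rfl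

lemma posPart_sub_negPart (x : l1Space) : posPart x - negPart x = x := by
  apply lp.ext
  funext i
  rw [lp.coeFn_sub]
  simp only [Pi.sub_apply, posPart_apply, negPart_apply]
  rcases le_total (x i) 0 with h | h
  · rw [max_eq_right h, max_eq_left (by linarith)]; ring
  · rw [max_eq_left h, max_eq_right (by linarith)]; ring

lemma norm_negPart (x : l1Space) : ‖negPart x‖ = N x := by
  rw [norm_eq_tsum, N]
  apply tsum_congr
  intro i
  rw [negPart_apply, abs_of_nonneg (le_max_right _ _)]

lemma N_sub_le_norm (a b : l1Space) (ha : ∀ i, 0 ≤ a i) : N (a - b) ≤ ‖b‖ := by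
  rw [norm_eq_tsum, N]
  apply Summable.tsum_le_tsum _ (summable_negpart _) (summable_abs b)
  intro i
  rw [lp.coeFn_sub]
  simp only [Pi.sub_apply]
  apply max_le _ (abs_nonneg _)
  have := ha i
  have := le_abs_self (b i)
  linarith

/-- The key operator estimate: if `T` has nonnegative off-diagonal entries and norm at most
`l`, then `A = T + l•id` has all nonnegative entries, and `N (A x) ≤ 2 l * N x`. -/
lemma N_shifted_apply_le (T : l1Space →L[ℝ] l1Space) (l : ℝ) (hl : ‖T‖ ≤ l)
    (hoff : ∀ i j : ℕ, i ≠ j → 0 ≤ (T (lp.single 1 j 1)) i) (x : l1Space) :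
    N ((T + l • ContinuousLinearMap.id ℝ l1Space) x) ≤ (2 * l) * N x := by
  set A := T + l • ContinuousLinearMap.id ℝ l1Space with hA
  have hl0 : 0 ≤ l := le_trans (norm_nonneg T) hl
  have hentries : ∀ j i, 0 ≤ (A (lp.single 1 j 1)) i := by
    intro j i
    have hAapp : A (lp.single 1 j 1) = T (lp.single 1 j 1) + l • lp.single 1 j 1 := by
      simp [hA]
    rw [hAapp, lp.coeFn_add]
    simp only [Pi.add_apply]
    rw [lp.coeFn_smul]
    simp only [Pi.smul_apply, smul_eq_mul]
    rcases eq_or_ne i j with rfl | h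
    · set y : l1Space := T (lp.single 1 i 1) with hy
      have h1 : |y i| ≤ ‖y‖ := by
        simpa using lp.norm_apply_le_norm (by norm_num) y i
      have h2 : ‖y‖ ≤ ‖T‖ * ‖(lp.single 1 i (1:ℝ) : l1Space)‖ := T.le_opNorm _
      have h3 : ‖(lp.single 1 i (1:ℝ) : l1Space)‖ = 1 := by
        have := lp.norm_single (p := 1) (E := fun _ : ℕ => ℝ) (by norm_num)
          i (1:ℝ)
        simpa using this
      rw [lp.single_apply]
      have h4 := (abs_le.1 h1).1
      rw [h3, mul_one] at h2
      norm_num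
      linarith
    · rw [lp.single_apply, Pi.single_apply, if_neg h]
      have := hoff i j h
      linarith
  have hAnorm : ‖A‖ ≤ 2 * l := by
    calc ‖A‖ ≤ ‖T‖ + ‖l • ContinuousLinearMap.id ℝ l1Space‖ := norm_add_le _ _
      _ ≤ l + l * 1 := by
          apply add_le_add hl
          calc ‖l • ContinuousLinearMap.id ℝ l1Space‖
              ≤ ‖l‖ * ‖ContinuousLinearMap.id ℝ l1Space‖ := ContinuousLinearMap.opNorm_smul_le _ _
            _ ≤ l * 1 := by
                rw [Real.norm_eq_abs, abs_of_nonneg hl0]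
                exact mul_le_mul_of_nonneg_left ContinuousLinearMap.norm_id_le hl0
      _ = 2 * l := by ring
  have hx : A x = A (posPart x) - A (negPart x) := by
    rw [← map_sub, posPart_sub_negPart]
  rw [hx]
  calc N (A (posPart x) - A (negPart x)) ≤ ‖A (negPart x)‖ := by
        apply N_sub_le_norm
        exact apply_nonneg_of_entries A hentries (posPart x)
          (fun i => le_max_right _ _)
    _ ≤ ‖A‖ * ‖negPart x‖ := A.le_opNorm _
    _ ≤ (2 * l) * N x := by
        rw [norm_negPart]
        exact mul_le_mul_of_nonneg_right hAnorm (by rw [← norm_negPart]; exact norm_nonneg _)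


lemma fubini_smul (s t : ℝ) (hst : s ≤ t) (f : ℝ → l1Space)
    (hf : IntervalIntegrable f volume s t) (g : ℝ → ℝ) (hg : Continuous g) :
    (∫ u in s..t, g u • (∫ r in s..u, f r)) = ∫ r in s..t, (∫ u in r..t, g u) • f r := by
  set μ := volume.restrict (Ioc s t) with hμ
  have hfI : Integrable f μ := (intervalIntegrable_iff_integrableOn_Ioc_of_le hst).1 hf
  have hgI : Integrable g μ := (hg.intervalIntegrable s t).1
  set F : ℝ → ℝ → l1Space := fun u r => if r ≤ u then g u • f r else 0 with hF
  have h_unc : Integrable (Function.uncurry F) (μ.prod μ) := by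
    have h1 : Integrable (fun p : ℝ × ℝ => g p.1 • f p.2) (μ.prod μ) :=
      hgI.smul_prod hfI
    have hms : MeasurableSet {p : ℝ × ℝ | p.2 ≤ p.1} :=
      measurableSet_le measurable_snd measurable_fst
    have heq : Function.uncurry F =
        ({p : ℝ × ℝ | p.2 ≤ p.1}).indicator (fun p => g p.1 • f p.2) := by
      funext p
      by_cases h : p.2 ≤ p.1 <;>
        simp [Function.uncurry, hF, h, Set.indicator_apply]
    rw [heq]
    exact h1.indicator hms
  have hL : (∫ u in s..t, g u • (∫ r in s..u, f r)) = ∫ u, (∫ r, F u r ∂μ) ∂μ := by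
    rw [intervalIntegral.integral_of_le hst]
    apply setIntegral_congr_fun measurableSet_Ioc
    intro u hu
    show g u • (∫ r in s..u, f r) = ∫ r, F u r ∂μ
    have h1 : (fun r => F u r) =ᵐ[μ] (Ioc s u).indicator (fun r => g u • f r) := by
      filter_upwards [ae_restrict_mem measurableSet_Ioc] with r hr
      by_cases h : r ≤ u
      · rw [hF]
        simp only [if_pos h]
        rw [Set.indicator_of_mem (show r ∈ Ioc s u from ⟨hr.1, h⟩)]
      · rw [hF]
        simp only [if_neg h]
        rw [Set.indicator_of_notMem (fun hmem => h hmem.2)]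
    rw [integral_congr_ae h1, hμ, setIntegral_indicator measurableSet_Ioc]
    have h2 : Ioc s t ∩ Ioc s u = Ioc s u :=
      Set.inter_eq_self_of_subset_right (Set.Ioc_subset_Ioc le_rfl hu.2)
    rw [h2, integral_smul, intervalIntegral.integral_of_le hu.1.le]
  have hR : (∫ r in s..t, (∫ u in r..t, g u) • f r) = ∫ r, (∫ u, F u r ∂μ) ∂μ := by
    rw [intervalIntegral.integral_of_le hst]
    apply setIntegral_congr_fun measurableSet_Ioc
    intro r hr
    show (∫ u in r..t, g u) • f r = ∫ u, F u r ∂μ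
    have h1 : (fun u => F u r) =ᵐ[μ] (Icc r t).indicator (fun u => g u • f r) := by
      filter_upwards [ae_restrict_mem measurableSet_Ioc] with u hu
      by_cases h : r ≤ u
      · rw [hF]
        simp only [if_pos h]
        rw [Set.indicator_of_mem (show u ∈ Icc r t from ⟨h, hu.2⟩)]
      · rw [hF]
        simp only [if_neg h]
        rw [Set.indicator_of_notMem (fun hmem => h hmem.1)]
    rw [integral_congr_ae h1, hμ, setIntegral_indicator measurableSet_Icc]
    have h2 : Ioc s t ∩ Icc r t = Icc r t := by
      apply Set.inter_eq_self_of_subset_right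
      intro u hu
      exact ⟨lt_of_lt_of_le hr.1 hu.1, hu.2⟩
    rw [h2, integral_Icc_eq_integral_Ioc, ← intervalIntegral.integral_of_le hr.2,
      intervalIntegral.integral_smul_const]
  rw [hL, hR]
  exact integral_integral_swap h_unc


end L1Pos

open L1Pos Set in
/-- Let `C : [0,∞) → L(l¹)` be a strongly measurable family of continuous
linear operators on `l¹(ℕ, ℝ)` with `‖C t‖ ≤ M` for a.e. `t`, whose matrix entries are
(a.e.) nonnegative off the diagonal.  If `v : [s,∞) → l¹` is continuous and satisfies
`v t = v s + ∫_s^t C u (v u) du` (Bochner integral in `l¹`) for all `t ≥ s`, and every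
coordinate of `v s` is nonnegative, then every coordinate of `v t` is nonnegative for all
`t ≥ s`. -/
theorem coordinates_nonneg_of_offdiagonal_nonneg
    (C : ℝ → (l1Space →L[ℝ] l1Space)) (M : ℝ)
    (hmeas : StronglyMeasurable C)
    (hM : ∀ᵐ t : ℝ, 0 ≤ t → ‖C t‖ ≤ M)
    (hpos : ∀ᵐ t : ℝ, 0 ≤ t → ∀ i j : ℕ, i ≠ j → 0 ≤ (C t (lp.single 1 j (1 : ℝ))) i)
    (s : ℝ) (hs : 0 ≤ s)
    (v : ℝ → l1Space)
    (hvcont : ContinuousOn v (Set.Ici s))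
    (hv : ∀ t, s ≤ t → v t = v s + ∫ u in s..t, C u (v u))
    (hv0 : ∀ i : ℕ, 0 ≤ (v s) i) :
    ∀ t, s ≤ t → ∀ i : ℕ, 0 ≤ (v t) i := by
  -- extend `v` continuously to all of `ℝ`
  set w : ℝ → l1Space := fun u => v (max u s) with hw
  have hwcont : Continuous w := by
    apply hvcont.comp_continuous (continuous_id.max continuous_const)
    intro x; exact le_max_right x s
  have hws : w s = v s := by simp [hw]
  have hweq : ∀ u, s ≤ u → w u = v u := fun u hu => by simp [hw, max_eq_left hu]
  have hvw : ∀ t', s ≤ t' → w t' = w s + ∫ u in s..t', C u (w u) := by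
    intro t' ht'
    rw [hweq t' ht', hws, hv t' ht']
    congr 1
    apply intervalIntegral.integral_congr
    intro u hu
    rw [Set.uIcc_of_le ht'] at hu
    show C u (v u) = C u (w u)
    rw [hweq u hu.1]
  set l : ℝ := |M| + 1 with hldef
  have hl0 : 0 < l := by positivity
  set K : ℝ := 2 * l with hKdef
  have hK0 : 0 ≤ K := by positivity
  have hg1cont : Continuous fun u : ℝ => Real.exp (l * (u - s)) :=
    Real.continuous_exp.comp (continuous_const.mul (continuous_id.sub continuous_const))
  have hg2cont : Continuous fun u : ℝ => l * Real.exp (l * (u - s)) :=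
    continuous_const.mul hg1cont
  set Y : ℝ → l1Space := fun u => Real.exp (l * (u - s)) • w u with hY
  have hYcont : Continuous Y := hg1cont.smul hwcont
  have hYs : Y s = w s := by simp [hY]
  have hCw_meas : StronglyMeasurable (fun u => C u (w u)) :=
    isBoundedBilinearMap_apply.continuous.comp_stronglyMeasurable
      (hmeas.prodMk hwcont.stronglyMeasurable)
  -- derivative of the exponential weight
  have hg1d : ∀ u : ℝ, HasDerivAt (fun r => Real.exp (l * (r - s)))
      (l * Real.exp (l * (u - s))) u := by
    intro u
    have h1 : HasDerivAt (fun r : ℝ => l * (r - s)) l u := by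
      simpa using ((hasDerivAt_id u).sub_const s).const_mul l
    simpa [mul_comm] using h1.exp
  have hscalar : ∀ a b : ℝ, (∫ u in a..b, l * Real.exp (l * (u - s)))
      = Real.exp (l * (b - s)) - Real.exp (l * (a - s)) := by
    intro a b
    apply intervalIntegral.integral_eq_sub_of_hasDerivAt (fun u _ => hg1d u)
    exact hg2cont.intervalIntegrable a b
  set G : ℝ → l1Space := fun u =>
    Real.exp (l * (u - s)) • (C u (w u)) + (l * Real.exp (l * (u - s))) • w u with hG
  have hNYs : N (Y s) = 0 := by
    rw [hYs, hws]
    exact N_eq_zero_of_nonneg hv0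
  -- the key Gronwall-type inequality
  have hkey : ∀ t', s ≤ t' → N (Y t') ≤ K * ∫ u in s..t', N (Y u) := by
    intro t' hst'
    -- integrability of the basic integrand
    obtain ⟨B, hB⟩ := IsCompact.exists_bound_of_continuousOn isCompact_Icc
      (hwcont.continuousOn (s := Icc s t'))
    have hint : IntervalIntegrable (fun u => C u (w u)) volume s t' := by
      rw [intervalIntegrable_iff_integrableOn_Ioc_of_le hst']
      apply Integrable.mono' (g := fun _ => |M| * B)
        (integrableOn_const measure_Ioc_lt_top.ne)
        hCw_meas.aestronglyMeasurable.restrict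
      filter_upwards [ae_restrict_mem measurableSet_Ioc, ae_restrict_of_ae hM] with u hu h1
      have hu0 : 0 ≤ u := le_trans hs hu.1.le
      calc ‖C u (w u)‖ ≤ ‖C u‖ * ‖w u‖ := (C u).le_opNorm _
        _ ≤ |M| * B := mul_le_mul (le_trans (h1 hu0) (le_abs_self M))
            (hB u ⟨hu.1.le, hu.2⟩) (norm_nonneg _) (abs_nonneg M)
    have hintOn : IntegrableOn (fun u => C u (w u)) (Ioc s t') :=
      (intervalIntegrable_iff_integrableOn_Ioc_of_le hst').1 hint
    have hG1 : IntervalIntegrable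
        (fun u => Real.exp (l * (u - s)) • (C u (w u))) volume s t' := by
      rw [intervalIntegrable_iff_integrableOn_Ioc_of_le hst']
      apply Integrable.mono' (g := fun u => Real.exp (l * (t' - s)) * ‖C u (w u)‖)
        (hintOn.norm.const_mul _)
        (hg1cont.aestronglyMeasurable.smul hintOn.aestronglyMeasurable)
      filter_upwards [ae_restrict_mem measurableSet_Ioc] with u hu
      rw [Pi.smul_apply', norm_smul]
      simp only [Real.norm_eq_abs, Real.abs_exp]
      apply mul_le_mul_of_nonneg_right _ (norm_nonneg _)
      apply Real.exp_le_exp.2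
      nlinarith [hu.2, hl0]
    have hG2 : IntervalIntegrable
        (fun u => (l * Real.exp (l * (u - s))) • w u) volume s t' :=
      (hg2cont.smul hwcont).intervalIntegrable s t'
    have hGint : IntervalIntegrable G volume s t' := hG1.add hG2
    -- the transformed integral equation
    have heq : Y t' = Y s + ∫ u in s..t', G u := by
      have h2a : IntervalIntegrable (fun u => (l * Real.exp (l * (u - s))) • w s)
          volume s t' := (hg2cont.smul continuous_const).intervalIntegrable s t'
      have h2b : IntervalIntegrable
          (fun u => (l * Real.exp (l * (u - s))) • (∫ r in s..u, C r (w r)))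
          volume s t' := by
        apply ContinuousOn.intervalIntegrable
        exact hg2cont.continuousOn.smul
          (intervalIntegral.continuousOn_primitive_interval' hint left_mem_uIcc)
      have e1 : ∫ u in s..t', G u =
          (∫ u in s..t', Real.exp (l * (u - s)) • (C u (w u)))
          + ∫ u in s..t', (l * Real.exp (l * (u - s))) • w u :=
        intervalIntegral.integral_add hG1 hG2
      have e2 : (∫ u in s..t', (l * Real.exp (l * (u - s))) • w u)
          = (∫ u in s..t', (l * Real.exp (l * (u - s))) • w s)
          + ∫ u in s..t', (l * Real.exp (l * (u - s))) • (∫ r in s..u, C r (w r)) := by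
        rw [← intervalIntegral.integral_add h2a h2b]
        apply intervalIntegral.integral_congr
        intro u hu
        rw [Set.uIcc_of_le hst'] at hu
        show (l * Real.exp (l * (u - s))) • w u
          = (l * Real.exp (l * (u - s))) • w s
            + (l * Real.exp (l * (u - s))) • (∫ r in s..u, C r (w r))
        rw [← smul_add, ← hvw u hu.1]
      have e3 : (∫ u in s..t', (l * Real.exp (l * (u - s))) • w s)
          = (Real.exp (l * (t' - s)) - 1) • w s := by
        rw [intervalIntegral.integral_smul_const, hscalar s t']
        simp
      have e4 : (∫ u in s..t', (l * Real.exp (l * (u - s))) • (∫ r in s..u, C r (w r)))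
          = Real.exp (l * (t' - s)) • (∫ r in s..t', C r (w r))
            - ∫ r in s..t', Real.exp (l * (r - s)) • (C r (w r)) := by
        rw [fubini_smul s t' hst' _ hint _ hg2cont]
        have hcong : ∀ r ∈ Set.uIcc s t',
            (∫ u in r..t', l * Real.exp (l * (u - s))) • (C r (w r))
            = Real.exp (l * (t' - s)) • (C r (w r))
              - Real.exp (l * (r - s)) • (C r (w r)) := by
          intro r _
          rw [hscalar r t', sub_smul]
        have hsub1 : IntervalIntegrable
            (fun r => Real.exp (l * (t' - s)) • (C r (w r))) volume s t' :=
          hint.smul (Real.exp (l * (t' - s)))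
        rw [intervalIntegral.integral_congr hcong,
          intervalIntegral.integral_sub hsub1 hG1,
          intervalIntegral.integral_smul]
      rw [e1, e2, e3, e4, hYs]
      have hYt' : Y t' = Real.exp (l * (t' - s)) • (w s + ∫ r in s..t', C r (w r)) := by
        rw [← hvw t' hst']
      rw [hYt']
      module
    -- a.e. bound on the integrand
    have hae : ∀ᵐ u ∂(volume.restrict (Ioc s t')), N (G u) ≤ K * N (Y u) := by
      filter_upwards [ae_restrict_mem measurableSet_Ioc, ae_restrict_of_ae hM,
        ae_restrict_of_ae hpos] with u hu h1 h2
      have hu0 : 0 ≤ u := le_trans hs hu.1.le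
      have hCu : ‖C u‖ ≤ l := by
        rw [hldef]
        linarith [le_trans (h1 hu0) (le_abs_self M)]
      have hGu : G u = (C u + l • ContinuousLinearMap.id ℝ l1Space) (Y u) := by
        show Real.exp (l * (u - s)) • (C u (w u)) + (l * Real.exp (l * (u - s))) • w u
          = (C u + l • ContinuousLinearMap.id ℝ l1Space) (Real.exp (l * (u - s)) • w u)
        rw [ContinuousLinearMap.add_apply, _root_.map_smul,
          ContinuousLinearMap.smul_apply, ContinuousLinearMap.id_apply, smul_smul]
      rw [hGu, hKdef]
      exact N_shifted_apply_le (C u) l hCu (fun i j hij => h2 hu0 i j hij) (Y u)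
    -- integrability of the N-compositions
    have hGon : Integrable G (volume.restrict (Ioc s t')) :=
      (intervalIntegrable_iff_integrableOn_Ioc_of_le hst').1 hGint
    have hNG : Integrable (fun u => N (G u)) (volume.restrict (Ioc s t')) := by
      apply Integrable.mono' hGon.norm
        (lipschitz_N.continuous.comp_aestronglyMeasurable hGon.aestronglyMeasurable)
      filter_upwards with u
      rw [Real.norm_eq_abs, abs_of_nonneg (N_nonneg _)]
      exact N_le_norm _
    have hKNY : Integrable (fun u => K * N (Y u)) (volume.restrict (Ioc s t')) :=
      (((continuous_const.mul (lipschitz_N.continuous.comp hYcont))).intervalIntegrable s t').1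
    calc N (Y t') = N (Y s + ∫ u in s..t', G u) := by rw [← heq]
      _ ≤ N (Y s) + N (∫ u in s..t', G u) := N_add_le _ _
      _ = N (∫ u in Ioc s t', G u) := by
          rw [hNYs, zero_add, intervalIntegral.integral_of_le hst']
      _ ≤ ∫ u in Ioc s t', N (G u) := N_integral_le _ _ hGon hNG
      _ ≤ ∫ u in Ioc s t', K * N (Y u) := integral_mono_ae hNG hKNY hae
      _ = K * ∫ u in s..t', N (Y u) := by
          rw [intervalIntegral.integral_of_le hst', MeasureTheory.integral_const_mul]
  -- Gronwall argument
  have hNzero : ∀ t', s ≤ t' → N (Y t') = 0 := by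
    intro t ht
    set f : ℝ → ℝ := fun u => N (Y u) with hf
    have hfcont : Continuous f := lipschitz_N.continuous.comp hYcont
    have hf0 : ∀ u, 0 ≤ f u := fun u => N_nonneg _
    set φ : ℝ → ℝ := fun r => ∫ u in s..r, f u with hφ
    have hφd : ∀ r, HasDerivAt φ (f r) r := fun r =>
      intervalIntegral.integral_hasDerivAt_right (hfcont.intervalIntegrable s r)
        (hfcont.stronglyMeasurableAtFilter _ _) hfcont.continuousAt
    set ψ : ℝ → ℝ := fun r => Real.exp (-K * r) * φ r with hψ
    have hψd : ∀ r, HasDerivAt ψ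
        ((-K * Real.exp (-K * r)) * φ r + Real.exp (-K * r) * f r) r := by
      intro r
      have h1 : HasDerivAt (fun x : ℝ => Real.exp (-K * x)) (-K * Real.exp (-K * r)) r := by
        simpa [mul_comm] using ((hasDerivAt_id r).const_mul (-K)).exp
      exact h1.mul (hφd r)
    have hφcont : Continuous φ := by
      have hd : Differentiable ℝ φ := fun r => (hφd r).differentiableAt
      exact hd.continuous
    have hψcont : Continuous ψ :=
      (Real.continuous_exp.comp (continuous_const.mul continuous_id)).mul hφcont
    have hanti : AntitoneOn ψ (Set.Ici s) := by
      apply antitoneOn_of_deriv_nonpos (convex_Ici s) hψcont.continuousOn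
      · intro x _
        exact (hψd x).differentiableAt.differentiableWithinAt
      · intro x hx
        rw [interior_Ici] at hx
        rw [(hψd x).deriv]
        have h2 : f x ≤ K * φ x := hkey x (le_of_lt hx)
        have h3 := mul_le_mul_of_nonneg_left h2 (Real.exp_pos (-K * x)).le
        nlinarith [Real.exp_pos (-K * x)]
    have hψs : ψ s = 0 := by
      show Real.exp (-K * s) * (∫ u in s..s, f u) = 0
      rw [intervalIntegral.integral_same, mul_zero]
    have hψt : ψ t ≤ 0 := by
      rw [← hψs]
      exact hanti (Set.self_mem_Ici) ht ht
    have hφnn : 0 ≤ φ t :=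
      intervalIntegral.integral_nonneg ht (fun u _ => hf0 u)
    have hφt : φ t ≤ 0 := by
      have he := Real.exp_pos (-K * t)
      have hψt' : Real.exp (-K * t) * φ t ≤ 0 := hψt
      nlinarith
    have hft : f t ≤ 0 := by
      have h4 : φ t = 0 := le_antisymm hφt hφnn
      have h5 : f t ≤ K * φ t := hkey t ht
      rw [h4, mul_zero] at h5
      exact h5
    exact le_antisymm hft (hf0 t)
  -- conclusion
  intro t ht i
  have h1 := nonneg_of_N_eq_zero (hNzero t ht) i
  have h2 : (Y t) i = Real.exp (l * (t - s)) * (w t) i := by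
    rw [show Y t = Real.exp (l * (t - s)) • w t from rfl, lp.coeFn_smul]
    simp
  rw [h2] at h1
  have h3 : 0 ≤ (w t) i := by
    by_contra hneg
    push_neg at hneg
    nlinarith [Real.exp_pos (l * (t - s))]
  rwa [hweq t ht] at h3
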